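/- Let M be a positive integer, h > 0, τ > 0, μ > 0, ν ≥ 0, γ, κ ∈ ℝ, and let a, b be periodic grid functions. Suppose the periodic grid functions u, v satisfy the homogeneous linear system (1/(2τ))·u_i − (μ/(2τ))·v_i + (γ/2)·ψ(a,u)_i − (γh²/4)·ψ(b,u)_i + (κ/2)·Δ_x u_i − (κh²/12)·Δ_x v_i − (ν/2)·v_i = 0 for all i, together with the reduction relation v_i = δ_x² u_i − (h²/12)·δ_x² v_i for all i. Then u_i = 0 and v_i = 0 for all i. (Kernel lemma in the proof of unique solvability, Theorem 5.1: the homogeneous system at each time level admits only the zero solution.) -/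

import Mathlib

open Finset

namespace BBMB

/-- A periodic grid function with period `M`. -/
def Periodic (M : ℕ) (u : ℤ → ℝ) : Prop := ∀ i : ℤ, u (i + (M : ℤ)) = u i

/-- Forward difference `δ_x u_{i+1/2} = (u_{i+1} - u_i)/h`. -/
noncomputable def dxp (h : ℝ) (u : ℤ → ℝ) (i : ℤ) : ℝ := (u (i + 1) - u i) / h

/-- Backward difference `δ_x u_{i-1/2} = (u_i - u_{i-1})/h`. -/
noncomputable def dxm (h : ℝ) (u : ℤ → ℝ) (i : ℤ) : ℝ := (u i - u (i - 1)) / h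

/-- Second difference `δ_x² u_i = (u_{i+1} - 2 u_i + u_{i-1})/h²`. -/
noncomputable def dxx (h : ℝ) (u : ℤ → ℝ) (i : ℤ) : ℝ :=
  (u (i + 1) - 2 * u i + u (i - 1)) / h ^ 2

/-- Centered difference `Δ_x u_i = (u_{i+1} - u_{i-1})/(2h)`. -/
noncomputable def Dx (h : ℝ) (u : ℤ → ℝ) (i : ℤ) : ℝ := (u (i + 1) - u (i - 1)) / (2 * h)

/-- Discrete inner product `(u, w) = h ∑_{i=1}^{M} u_i w_i`. -/
noncomputable def ip (M : ℕ) (h : ℝ) (u w : ℤ → ℝ) : ℝ :=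
  h * ∑ i ∈ Finset.Icc (1 : ℤ) (M : ℤ), u i * w i

/-- Discrete inner product `⟨δ_x u, δ_x w⟩ = h ∑_{i=1}^{M} (δ_x u_{i-1/2})(δ_x w_{i-1/2})`. -/
noncomputable def dip (M : ℕ) (h : ℝ) (u w : ℤ → ℝ) : ℝ :=
  h * ∑ i ∈ Finset.Icc (1 : ℤ) (M : ℤ), dxm h u i * dxm h w i

/-- Discrete `L²` norm `‖u‖ = √((u,u))`. -/
noncomputable def nrm (M : ℕ) (h : ℝ) (u : ℤ → ℝ) : ℝ := Real.sqrt (ip M h u u)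

/-- Discrete `H¹` seminorm `|u|₁ = √(⟨δ_x u, δ_x u⟩)`. -/
noncomputable def snorm (M : ℕ) (h : ℝ) (u : ℤ → ℝ) : ℝ := Real.sqrt (dip M h u u)

/-- Trilinear term `ψ(u,v)_i = (1/3) (u_i Δ_x v_i + Δ_x (u·v)_i)`. -/
noncomputable def psi (h : ℝ) (u v : ℤ → ℝ) (i : ℤ) : ℝ :=
  (1 / 3) * (u i * Dx h v i + Dx h (fun j => u j * v j) i)

section Helpers

variable {M : ℕ}

lemma insert_left (hM : 0 < M) :
    Finset.Icc (1:ℤ) (M:ℤ) = insert (1:ℤ) (Finset.Icc 2 (M:ℤ)) := by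
  have h1 : (1:ℤ) ≤ (M:ℤ) := by exact_mod_cast hM
  ext x; simp only [Finset.mem_Icc, Finset.mem_insert]; omega

lemma insert_right (hM : 0 < M) :
    Finset.Icc (2:ℤ) ((M:ℤ)+1) = insert ((M:ℤ)+1) (Finset.Icc 2 (M:ℤ)) := by
  have h1 : (1:ℤ) ≤ (M:ℤ) := by exact_mod_cast hM
  ext x; simp only [Finset.mem_Icc, Finset.mem_insert]; omega

lemma sum_shift (hM : 0 < M) (f : ℤ → ℝ) (hf : f ((M:ℤ)+1) = f 1) :
    ∑ i ∈ Finset.Icc (1:ℤ) (M:ℤ), f (i+1) = ∑ i ∈ Finset.Icc (1:ℤ) (M:ℤ), f i := by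
  have h1 : ∑ i ∈ Finset.Icc (1:ℤ) (M:ℤ), f (i+1)
      = ∑ i ∈ Finset.Icc (2:ℤ) ((M:ℤ)+1), f i := by
    rw [show Finset.Icc (2:ℤ) ((M:ℤ)+1) = (Finset.Icc (1:ℤ) (M:ℤ)).map (addRightEmbedding 1) by
      rw [Finset.map_add_right_Icc]; norm_num, Finset.sum_map]
    rfl
  rw [h1, insert_right hM, insert_left hM, Finset.sum_insert (by simp),
    Finset.sum_insert (by simp), hf]

lemma sum_shift' (hM : 0 < M) (f : ℤ → ℝ) (hf : f (M:ℤ) = f 0) :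
    ∑ i ∈ Finset.Icc (1:ℤ) (M:ℤ), f (i-1) = ∑ i ∈ Finset.Icc (1:ℤ) (M:ℤ), f i := by
  have h := sum_shift hM (fun i => f (i-1)) (by simpa using hf)
  simpa using h.symm

lemma endp (f : ℤ → ℝ) (hf : Periodic M f) : f ((M:ℤ)+1) = f 1 := by
  have := hf 1; rwa [add_comm] at this

lemma endp0 (f : ℤ → ℝ) (hf : Periodic M f) : f (M:ℤ) = f 0 := by
  have := hf 0; rwa [zero_add] at this

lemma I1 (hM : 0 < M) (f g : ℤ → ℝ) (hf : Periodic M f) (hg : Periodic M g) :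
    ∑ i ∈ Finset.Icc (1:ℤ) (M:ℤ), f i * g (i+1)
      = ∑ i ∈ Finset.Icc (1:ℤ) (M:ℤ), f (i-1) * g i := by
  have h := sum_shift' hM (fun i => f i * g (i+1))
    (by simp only [endp0 f hf, endp g hg]; norm_num)
  simp only [sub_add_cancel] at h
  exact h.symm

lemma I2 (hM : 0 < M) (f g : ℤ → ℝ) (hf : Periodic M f) (hg : Periodic M g) :
    ∑ i ∈ Finset.Icc (1:ℤ) (M:ℤ), f i * g (i-1)
      = ∑ i ∈ Finset.Icc (1:ℤ) (M:ℤ), f (i+1) * g i := by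
  have h := sum_shift hM (fun i => f i * g (i-1))
    (by simp only [endp f hf]; rw [show (M:ℤ)+1-1 = (M:ℤ) by ring, endp0 g hg]; norm_num)
  simp only [add_sub_cancel_right] at h
  exact h.symm

lemma I3 (hM : 0 < M) (f g : ℤ → ℝ) (hf : Periodic M f) (hg : Periodic M g) :
    ∑ i ∈ Finset.Icc (1:ℤ) (M:ℤ), f (i+1) * g (i+1)
      = ∑ i ∈ Finset.Icc (1:ℤ) (M:ℤ), f i * g i :=
  sum_shift hM (fun i => f i * g i) (by simp only [endp f hf, endp g hg])

lemma I4 (hM : 0 < M) (f g : ℤ → ℝ) (hf : Periodic M f) (hg : Periodic M g) :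
    ∑ i ∈ Finset.Icc (1:ℤ) (M:ℤ), f (i-1) * g (i-1)
      = ∑ i ∈ Finset.Icc (1:ℤ) (M:ℤ), f i * g i :=
  sum_shift' hM (fun i => f i * g i) (by simp only [endp0 f hf, endp0 g hg])

/-- Skew-symmetry of the centered difference. -/
lemma skew (hM : 0 < M) (f g : ℤ → ℝ) (hf : Periodic M f) (hg : Periodic M g) :
    ∑ i ∈ Finset.Icc (1:ℤ) (M:ℤ), f i * (g (i+1) - g (i-1))
      = - ∑ i ∈ Finset.Icc (1:ℤ) (M:ℤ), g i * (f (i+1) - f (i-1)) := by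
  have e1 := I1 hM f g hf hg
  have e2 := I2 hM f g hf hg
  have l : ∑ i ∈ Finset.Icc (1:ℤ) (M:ℤ), f i * (g (i+1) - g (i-1))
      = (∑ i ∈ Finset.Icc (1:ℤ) (M:ℤ), f i * g (i+1))
        - ∑ i ∈ Finset.Icc (1:ℤ) (M:ℤ), f i * g (i-1) := by
    rw [← Finset.sum_sub_distrib]; exact Finset.sum_congr rfl (fun i _ => by ring)
  have r : ∑ i ∈ Finset.Icc (1:ℤ) (M:ℤ), g i * (f (i+1) - f (i-1))
      = (∑ i ∈ Finset.Icc (1:ℤ) (M:ℤ), f (i+1) * g i)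
        - ∑ i ∈ Finset.Icc (1:ℤ) (M:ℤ), f (i-1) * g i := by
    rw [← Finset.sum_sub_distrib]; exact Finset.sum_congr rfl (fun i _ => by ring)
  rw [l, r, e1, e2]; ring

/-- Summation by parts for the second difference. -/
lemma sbp (hM : 0 < M) (f g : ℤ → ℝ) (hf : Periodic M f) (hg : Periodic M g) :
    ∑ i ∈ Finset.Icc (1:ℤ) (M:ℤ), (f (i+1) - 2 * f i + f (i-1)) * g i
      = - ∑ i ∈ Finset.Icc (1:ℤ) (M:ℤ), (f i - f (i-1)) * (g i - g (i-1)) := by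
  have e1 := I1 hM f g hf hg
  have e2 := I2 hM f g hf hg
  have e4 := I4 hM f g hf hg
  have l : ∑ i ∈ Finset.Icc (1:ℤ) (M:ℤ), (f (i+1) - 2 * f i + f (i-1)) * g i
      = ((∑ i ∈ Finset.Icc (1:ℤ) (M:ℤ), f (i+1) * g i)
        - 2 * ∑ i ∈ Finset.Icc (1:ℤ) (M:ℤ), f i * g i)
        + ∑ i ∈ Finset.Icc (1:ℤ) (M:ℤ), f (i-1) * g i := by
    rw [Finset.mul_sum, ← Finset.sum_sub_distrib, ← Finset.sum_add_distrib]
    exact Finset.sum_congr rfl (fun i _ => by ring)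
  have r : ∑ i ∈ Finset.Icc (1:ℤ) (M:ℤ), (f i - f (i-1)) * (g i - g (i-1))
      = (((∑ i ∈ Finset.Icc (1:ℤ) (M:ℤ), f i * g i)
        - ∑ i ∈ Finset.Icc (1:ℤ) (M:ℤ), f i * g (i-1))
        - ∑ i ∈ Finset.Icc (1:ℤ) (M:ℤ), f (i-1) * g i)
        + ∑ i ∈ Finset.Icc (1:ℤ) (M:ℤ), f (i-1) * g (i-1) := by
    simp only [← Finset.sum_add_distrib, ← Finset.sum_sub_distrib]
    exact Finset.sum_congr rfl (fun i _ => by ring)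
  rw [l, r, ← e2, e4, ← e1]; ring

/-- Self-adjointness of the second difference. -/
lemma selfadj (hM : 0 < M) (f g : ℤ → ℝ) (hf : Periodic M f) (hg : Periodic M g) :
    ∑ i ∈ Finset.Icc (1:ℤ) (M:ℤ), (f (i+1) - 2 * f i + f (i-1)) * g i
      = ∑ i ∈ Finset.Icc (1:ℤ) (M:ℤ), f i * (g (i+1) - 2 * g i + g (i-1)) := by
  rw [sbp hM f g hf hg]
  have h2 := sbp hM g f hg hf
  have l : ∑ i ∈ Finset.Icc (1:ℤ) (M:ℤ), f i * (g (i+1) - 2 * g i + g (i-1))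
      = ∑ i ∈ Finset.Icc (1:ℤ) (M:ℤ), (g (i+1) - 2 * g i + g (i-1)) * f i :=
    Finset.sum_congr rfl (fun i _ => by ring)
  rw [l, h2, neg_inj]
  exact Finset.sum_congr rfl (fun i _ => by ring)

/-- `∑ δ²f · Δf = 0` (quadratic identity). -/
lemma quadzero (hM : 0 < M) (f : ℤ → ℝ) (hf : Periodic M f) :
    ∑ i ∈ Finset.Icc (1:ℤ) (M:ℤ), (f (i+1) - 2 * f i + f (i-1)) * (f (i+1) - f (i-1)) = 0 := by
  have e1 := I1 hM f f hf hf
  have e3 := I3 hM f f hf hf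
  have e4 := I4 hM f f hf hf
  have l : ∑ i ∈ Finset.Icc (1:ℤ) (M:ℤ), (f (i+1) - 2 * f i + f (i-1)) * (f (i+1) - f (i-1))
      = (((∑ i ∈ Finset.Icc (1:ℤ) (M:ℤ), f (i+1) * f (i+1))
        - ∑ i ∈ Finset.Icc (1:ℤ) (M:ℤ), f (i-1) * f (i-1))
        - 2 * ∑ i ∈ Finset.Icc (1:ℤ) (M:ℤ), f i * f (i+1))
        + 2 * ∑ i ∈ Finset.Icc (1:ℤ) (M:ℤ), f (i-1) * f i := by
    simp only [Finset.mul_sum, ← Finset.sum_add_distrib, ← Finset.sum_sub_distrib]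
    exact Finset.sum_congr rfl (fun i _ => by ring)
  rw [l, e1, e3, e4]; ring

lemma per_mul {f g : ℤ → ℝ} (hf : Periodic M f) (hg : Periodic M g) :
    Periodic M (fun i => f i * g i) := fun i => by simp only [hf i, hg i]

lemma per_cd {f : ℤ → ℝ} (hf : Periodic M f) :
    Periodic M (fun i => f (i+1) - f (i-1)) := by
  intro i
  simp only
  rw [show i + (M:ℤ) + 1 = (i+1) + (M:ℤ) by ring, show i + (M:ℤ) - 1 = (i-1) + (M:ℤ) by ring,
    hf, hf]

lemma per_dxx {h : ℝ} {f : ℤ → ℝ} (hf : Periodic M f) :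
    Periodic M (fun i => dxx h f i) := by
  intro i
  simp only [dxx]
  rw [show i + (M:ℤ) + 1 = (i+1) + (M:ℤ) by ring, show i + (M:ℤ) - 1 = (i-1) + (M:ℤ) by ring,
    hf, hf, hf]

lemma periodic_ext_zero (hM : 0 < M) (f : ℤ → ℝ) (hf : Periodic M f)
    (h0 : ∀ i ∈ Finset.Icc (1:ℤ) (M:ℤ), f i = 0) : ∀ i : ℤ, f i = 0 := by
  have hk : ∀ k : ℤ, ∀ i : ℤ, f (i + (M:ℤ) * k) = f i := by
    intro k
    induction k using Int.induction_on with
    | zero => intro i; norm_num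
    | succ n ih =>
        intro i
        have e : i + (M:ℤ) * ((n:ℤ)+1) = (i + (M:ℤ) * (n:ℤ)) + M := by ring
        rw [e, hf, ih]
    | pred n ih =>
        intro i
        have e : (i + (M:ℤ) * (-(n:ℤ)-1)) + M = i + (M:ℤ) * (-(n:ℤ)) := by ring
        rw [← ih i, ← e, hf]
  intro i
  have hM' : (0:ℤ) < (M:ℤ) := by exact_mod_cast hM
  have key := Int.emod_add_mul_ediv (i-1) (M:ℤ)
  have hi : i = ((i - 1) % (M:ℤ) + 1) + (M:ℤ) * ((i - 1) / (M:ℤ)) := by linarith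
  have h1 : 1 ≤ (i - 1) % (M:ℤ) + 1 := by
    have := Int.emod_nonneg (i-1) (ne_of_gt hM'); omega
  have h2 : (i - 1) % (M:ℤ) + 1 ≤ (M:ℤ) := by
    have := Int.emod_lt_of_pos (i-1) hM'; omega
  rw [hi, hk ((i - 1) / (M:ℤ)) ((i - 1) % (M:ℤ) + 1)]
  exact h0 _ (Finset.mem_Icc.mpr ⟨h1, h2⟩)

end Helpers

set_option maxHeartbeats 1000000 in
/-- Kernel lemma in the proof of unique solvability (Theorem 5.1):
the homogeneous linear system admits only the zero solution. -/
theorem homogeneous_kernel (M : ℕ) (h τ μ ν γ κ : ℝ) (a b u v : ℤ → ℝ)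
    (hM : 0 < M) (hh : 0 < h) (hτ : 0 < τ) (hμ : 0 < μ) (hν : 0 ≤ ν)
    (ha : Periodic M a) (hb : Periodic M b) (hu : Periodic M u) (hv : Periodic M v)
    (heq : ∀ i : ℤ,
      1 / (2 * τ) * u i - μ / (2 * τ) * v i
        + γ / 2 * psi h a u i - γ * h ^ 2 / 4 * psi h b u i
        + κ / 2 * Dx h u i - κ * h ^ 2 / 12 * Dx h v i - ν / 2 * v i = 0)
    (hrel : ∀ i : ℤ, v i = dxx h u i - h ^ 2 / 12 * dxx h v i) :
    ∀ i : ℤ, u i = 0 ∧ v i = 0 := by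
  have hne : h ≠ 0 := ne_of_gt hh
  -- ψ-terms vanish against u
  have Zpsi : ∀ c : ℤ → ℝ, Periodic M c →
      ∑ i ∈ Finset.Icc (1:ℤ) (M:ℤ), psi h c u i * u i = 0 := by
    intro c hc
    have hcu : Periodic M (fun i => c i * u i) := per_mul hc hu
    have sk := skew hM (fun i => c i * u i) u hcu hu
    have expand : ∑ i ∈ Finset.Icc (1:ℤ) (M:ℤ), psi h c u i * u i
        = (1/(6*h)) * (∑ i ∈ Finset.Icc (1:ℤ) (M:ℤ), c i * u i * (u (i+1) - u (i-1)))
          + (1/(6*h)) * (∑ i ∈ Finset.Icc (1:ℤ) (M:ℤ),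
              u i * (c (i+1) * u (i+1) - c (i-1) * u (i-1))) := by
      simp only [Finset.mul_sum, ← Finset.sum_add_distrib]
      refine Finset.sum_congr rfl (fun i _ => ?_)
      simp only [psi, Dx]
      ring
    rw [expand, sk]; ring
  -- centered difference of u against u vanishes
  have Z2 : ∑ i ∈ Finset.Icc (1:ℤ) (M:ℤ), Dx h u i * u i = 0 := by
    have sk := skew hM u u hu hu
    have z : ∑ i ∈ Finset.Icc (1:ℤ) (M:ℤ), u i * (u (i+1) - u (i-1)) = 0 := by linarith
    have expand : ∑ i ∈ Finset.Icc (1:ℤ) (M:ℤ), Dx h u i * u i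
        = (1/(2*h)) * ∑ i ∈ Finset.Icc (1:ℤ) (M:ℤ), u i * (u (i+1) - u (i-1)) := by
      rw [Finset.mul_sum]
      refine Finset.sum_congr rfl (fun i _ => ?_)
      simp only [Dx]; ring
    rw [expand, z, mul_zero]
  -- ∑ δ²f Δf = 0 in dxx form reused below
  have quadu := quadzero hM u hu
  have quadv := quadzero hM v hv
  -- centered difference of v against u vanishes
  have Z3 : ∑ i ∈ Finset.Icc (1:ℤ) (M:ℤ), Dx h v i * u i = 0 := by
    have hw : Periodic M (fun i => u (i+1) - u (i-1)) := per_cd hu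
    have hdv : Periodic M (fun i => dxx h v i) := per_dxx hv
    -- ∑ dxx u * w = 0
    have A : ∑ i ∈ Finset.Icc (1:ℤ) (M:ℤ), dxx h u i * (u (i+1) - u (i-1)) = 0 := by
      have expand : ∑ i ∈ Finset.Icc (1:ℤ) (M:ℤ), dxx h u i * (u (i+1) - u (i-1))
          = (1/h^2) * ∑ i ∈ Finset.Icc (1:ℤ) (M:ℤ),
              (u (i+1) - 2 * u i + u (i-1)) * (u (i+1) - u (i-1)) := by
        rw [Finset.mul_sum]
        refine Finset.sum_congr rfl (fun i _ => ?_)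
        simp only [dxx]; ring
      rw [expand, quadu, mul_zero]
    -- ∑ dxx v * w = 0
    have B : ∑ i ∈ Finset.Icc (1:ℤ) (M:ℤ), dxx h v i * (u (i+1) - u (i-1)) = 0 := by
      have expand : ∑ i ∈ Finset.Icc (1:ℤ) (M:ℤ), dxx h v i * (u (i+1) - u (i-1))
          = (1/h^2) * ∑ i ∈ Finset.Icc (1:ℤ) (M:ℤ),
              (v (i+1) - 2 * v i + v (i-1)) * ((fun j => u (j+1) - u (j-1)) i) := by
        rw [Finset.mul_sum]
        refine Finset.sum_congr rfl (fun i _ => ?_)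
        simp only [dxx]; ring
      have sa := selfadj hM v (fun j => u (j+1) - u (j-1)) hv hw
      -- pointwise second difference of the centered difference
      have pw : ∀ i : ℤ, (u (i+1+1) - u (i+1-1)) - 2 * (u (i+1) - u (i-1))
          + (u (i-1+1) - u (i-1-1))
          = h^2 * (dxx h u (i+1) - dxx h u (i-1)) := by
        intro i
        simp only [dxx]
        rw [show (i:ℤ)+1-1 = i by ring, show (i:ℤ)-1+1 = i by ring]
        field_simp
        ring
      have step : ∑ i ∈ Finset.Icc (1:ℤ) (M:ℤ),
          v i * ((u (i+1+1) - u (i+1-1)) - 2 * (u (i+1) - u (i-1)) + (u (i-1+1) - u (i-1-1)))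
          = h^2 * ((∑ i ∈ Finset.Icc (1:ℤ) (M:ℤ), v i * (v (i+1) - v (i-1)))
            + h^2/12 * ∑ i ∈ Finset.Icc (1:ℤ) (M:ℤ), v i * (dxx h v (i+1) - dxx h v (i-1))) := by
        simp only [Finset.mul_sum, ← Finset.sum_add_distrib]
        refine Finset.sum_congr rfl (fun i _ => ?_)
        rw [pw i]
        have r1 : dxx h u (i+1) = v (i+1) + h^2/12 * dxx h v (i+1) := by
          have := hrel (i+1); linarith
        have r2 : dxx h u (i-1) = v (i-1) + h^2/12 * dxx h v (i-1) := by
          have := hrel (i-1); linarith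
        rw [r1, r2]; ring
      have s1 : ∑ i ∈ Finset.Icc (1:ℤ) (M:ℤ), v i * (v (i+1) - v (i-1)) = 0 := by
        have sk := skew hM v v hv hv; linarith
      have s2 : ∑ i ∈ Finset.Icc (1:ℤ) (M:ℤ), v i * (dxx h v (i+1) - dxx h v (i-1)) = 0 := by
        have sk := skew hM v (fun i => dxx h v i) hv hdv
        have z : ∑ i ∈ Finset.Icc (1:ℤ) (M:ℤ), dxx h v i * (v (i+1) - v (i-1)) = 0 := by
          have expand2 : ∑ i ∈ Finset.Icc (1:ℤ) (M:ℤ), dxx h v i * (v (i+1) - v (i-1))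
              = (1/h^2) * ∑ i ∈ Finset.Icc (1:ℤ) (M:ℤ),
                  (v (i+1) - 2 * v i + v (i-1)) * (v (i+1) - v (i-1)) := by
            rw [Finset.mul_sum]
            refine Finset.sum_congr rfl (fun i _ => ?_)
            simp only [dxx]; ring
          rw [expand2, quadv, mul_zero]
        rw [sk, z, neg_zero]
      rw [expand, sa, step, s1, s2]
      ring
    -- conclude Z3
    have sk := skew hM u v hu hv
    have z : ∑ i ∈ Finset.Icc (1:ℤ) (M:ℤ), v i * (u (i+1) - u (i-1)) = 0 := by
      have expand : ∑ i ∈ Finset.Icc (1:ℤ) (M:ℤ), v i * (u (i+1) - u (i-1))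
          = (∑ i ∈ Finset.Icc (1:ℤ) (M:ℤ), dxx h u i * (u (i+1) - u (i-1)))
            - h^2/12 * ∑ i ∈ Finset.Icc (1:ℤ) (M:ℤ), dxx h v i * (u (i+1) - u (i-1)) := by
        simp only [Finset.mul_sum, ← Finset.sum_sub_distrib]
        refine Finset.sum_congr rfl (fun i _ => ?_)
        rw [hrel i]; ring
      rw [expand, A, B]; ring
    have expand : ∑ i ∈ Finset.Icc (1:ℤ) (M:ℤ), Dx h v i * u i
        = (1/(2*h)) * ∑ i ∈ Finset.Icc (1:ℤ) (M:ℤ), u i * (v (i+1) - v (i-1)) := by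
      rw [Finset.mul_sum]
      refine Finset.sum_congr rfl (fun i _ => ?_)
      simp only [Dx]; ring
    rw [expand, sk, z]; ring
  -- the inner product (v,u)
  have Tudef := sbp hM u u hu hu
  have Tvdef := sbp hM v v hv hv
  have E : ∑ i ∈ Finset.Icc (1:ℤ) (M:ℤ), v i * u i
      = -(1/h^2) * (∑ i ∈ Finset.Icc (1:ℤ) (M:ℤ), (u i - u (i-1)) * (u i - u (i-1)))
        - h^2/12 * (∑ i ∈ Finset.Icc (1:ℤ) (M:ℤ), v i * v i)
        + h^2/144 * (∑ i ∈ Finset.Icc (1:ℤ) (M:ℤ), (v i - v (i-1)) * (v i - v (i-1))) := by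
    have A1 : ∑ i ∈ Finset.Icc (1:ℤ) (M:ℤ), dxx h u i * u i
        = -(1/h^2) * ∑ i ∈ Finset.Icc (1:ℤ) (M:ℤ), (u i - u (i-1)) * (u i - u (i-1)) := by
      have expand : ∑ i ∈ Finset.Icc (1:ℤ) (M:ℤ), dxx h u i * u i
          = (1/h^2) * ∑ i ∈ Finset.Icc (1:ℤ) (M:ℤ), (u (i+1) - 2 * u i + u (i-1)) * u i := by
        rw [Finset.mul_sum]
        refine Finset.sum_congr rfl (fun i _ => ?_)
        simp only [dxx]; ring
      rw [expand, Tudef]; ring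
    have A2 : ∑ i ∈ Finset.Icc (1:ℤ) (M:ℤ), dxx h v i * u i
        = (∑ i ∈ Finset.Icc (1:ℤ) (M:ℤ), v i * v i)
          - (1/12) * ∑ i ∈ Finset.Icc (1:ℤ) (M:ℤ), (v i - v (i-1)) * (v i - v (i-1)) := by
      have expand : ∑ i ∈ Finset.Icc (1:ℤ) (M:ℤ), dxx h v i * u i
          = (1/h^2) * ∑ i ∈ Finset.Icc (1:ℤ) (M:ℤ), (v (i+1) - 2 * v i + v (i-1)) * u i := by
        rw [Finset.mul_sum]
        refine Finset.sum_congr rfl (fun i _ => ?_)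
        simp only [dxx]; ring
      have sa := selfadj hM v u hv hu
      have step : ∑ i ∈ Finset.Icc (1:ℤ) (M:ℤ), v i * (u (i+1) - 2 * u i + u (i-1))
          = h^2 * ((∑ i ∈ Finset.Icc (1:ℤ) (M:ℤ), v i * v i)
            + h^2/12 * ∑ i ∈ Finset.Icc (1:ℤ) (M:ℤ), dxx h v i * v i) := by
        simp only [Finset.mul_sum, ← Finset.sum_add_distrib]
        refine Finset.sum_congr rfl (fun i _ => ?_)
        have r1 : u (i+1) - 2 * u i + u (i-1) = h^2 * dxx h u i := by
          simp only [dxx]; field_simp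
        rw [r1]
        have r2 : dxx h u i = v i + h^2/12 * dxx h v i := by have := hrel i; linarith
        rw [r2]; ring
      have A3 : ∑ i ∈ Finset.Icc (1:ℤ) (M:ℤ), dxx h v i * v i
          = -(1/h^2) * ∑ i ∈ Finset.Icc (1:ℤ) (M:ℤ), (v i - v (i-1)) * (v i - v (i-1)) := by
        have expand2 : ∑ i ∈ Finset.Icc (1:ℤ) (M:ℤ), dxx h v i * v i
            = (1/h^2) * ∑ i ∈ Finset.Icc (1:ℤ) (M:ℤ), (v (i+1) - 2 * v i + v (i-1)) * v i := by
          rw [Finset.mul_sum]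
          refine Finset.sum_congr rfl (fun i _ => ?_)
          simp only [dxx]; ring
        rw [expand2, Tvdef]; ring
      rw [expand, sa, step, A3]
      field_simp
      ring
    have expand : ∑ i ∈ Finset.Icc (1:ℤ) (M:ℤ), v i * u i
        = (∑ i ∈ Finset.Icc (1:ℤ) (M:ℤ), dxx h u i * u i)
          - h^2/12 * ∑ i ∈ Finset.Icc (1:ℤ) (M:ℤ), dxx h v i * u i := by
      simp only [Finset.mul_sum, ← Finset.sum_sub_distrib]
      refine Finset.sum_congr rfl (fun i _ => ?_)
      rw [hrel i]; ring
    rw [expand, A1, A2]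
    ring
  -- summing the homogeneous equation against u
  have hsum : ∑ i ∈ Finset.Icc (1:ℤ) (M:ℤ),
      ((1 / (2 * τ) * u i - μ / (2 * τ) * v i
        + γ / 2 * psi h a u i - γ * h ^ 2 / 4 * psi h b u i
        + κ / 2 * Dx h u i - κ * h ^ 2 / 12 * Dx h v i - ν / 2 * v i) * u i) = 0 :=
    Finset.sum_eq_zero (fun i _ => by rw [heq i, zero_mul])
  have hsum2 : 1/(2*τ) * (∑ i ∈ Finset.Icc (1:ℤ) (M:ℤ), u i * u i)
      - μ/(2*τ) * (∑ i ∈ Finset.Icc (1:ℤ) (M:ℤ), v i * u i)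
      + γ/2 * (∑ i ∈ Finset.Icc (1:ℤ) (M:ℤ), psi h a u i * u i)
      - γ*h^2/4 * (∑ i ∈ Finset.Icc (1:ℤ) (M:ℤ), psi h b u i * u i)
      + κ/2 * (∑ i ∈ Finset.Icc (1:ℤ) (M:ℤ), Dx h u i * u i)
      - κ*h^2/12 * (∑ i ∈ Finset.Icc (1:ℤ) (M:ℤ), Dx h v i * u i)
      - ν/2 * (∑ i ∈ Finset.Icc (1:ℤ) (M:ℤ), v i * u i) = 0 := by
    rw [← hsum]
    simp only [Finset.mul_sum, ← Finset.sum_add_distrib, ← Finset.sum_sub_distrib]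
    exact Finset.sum_congr rfl (fun i _ => by ring)
  rw [Zpsi a ha, Zpsi b hb, Z2, Z3] at hsum2
  -- abbreviations
  set Su : ℝ := ∑ i ∈ Finset.Icc (1:ℤ) (M:ℤ), u i * u i with hSu
  set Sv : ℝ := ∑ i ∈ Finset.Icc (1:ℤ) (M:ℤ), v i * v i with hSv
  set Tu : ℝ := ∑ i ∈ Finset.Icc (1:ℤ) (M:ℤ), (u i - u (i-1)) * (u i - u (i-1)) with hTu
  set Tv : ℝ := ∑ i ∈ Finset.Icc (1:ℤ) (M:ℤ), (v i - v (i-1)) * (v i - v (i-1)) with hTv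
  set Svu : ℝ := ∑ i ∈ Finset.Icc (1:ℤ) (M:ℤ), v i * u i with hSvu
  have hSu0 : 0 ≤ Su := Finset.sum_nonneg (fun i _ => mul_self_nonneg _)
  have hSv0 : 0 ≤ Sv := Finset.sum_nonneg (fun i _ => mul_self_nonneg _)
  have hTu0 : 0 ≤ Tu := Finset.sum_nonneg (fun i _ => mul_self_nonneg _)
  have hTv0 : 0 ≤ Tv := Finset.sum_nonneg (fun i _ => mul_self_nonneg _)
  -- inverse estimate Tv ≤ 4 Sv
  have hinv : Tv ≤ 4 * Sv := by
    have step : Tv ≤ ∑ i ∈ Finset.Icc (1:ℤ) (M:ℤ),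
        (2 * (v i * v i) + 2 * (v (i-1) * v (i-1))) := by
      refine Finset.sum_le_sum (fun i _ => ?_)
      nlinarith [sq_nonneg (v i + v (i-1))]
    have e4 := I4 hM v v hv hv
    have split : ∑ i ∈ Finset.Icc (1:ℤ) (M:ℤ), (2 * (v i * v i) + 2 * (v (i-1) * v (i-1)))
        = 2 * Sv + 2 * ∑ i ∈ Finset.Icc (1:ℤ) (M:ℤ), v (i-1) * v (i-1) := by
      rw [hSv, Finset.mul_sum, Finset.mul_sum, ← Finset.sum_add_distrib]
    rw [split, e4, ← hSv] at step
    linarith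
  -- positivity assembly
  have hh2 : (0:ℝ) < h^2 := by positivity
  have hbr : h^2/18 * Sv ≤ (1/h^2) * Tu + (h^2/12 * Sv - h^2/144 * Tv) := by
    have t1 : 0 ≤ (1/h^2) * Tu := by positivity
    have t2 : h^2/144 * Tv ≤ h^2/144 * (4 * Sv) :=
      mul_le_mul_of_nonneg_left hinv (by positivity)
    linarith
  have hc : 0 < μ/(2*τ) + ν/2 := by positivity
  have hSvuE : Svu = -(1/h^2) * Tu - h^2/12 * Sv + h^2/144 * Tv := E
  have hkey : 1/(2*τ) * Su + (μ/(2*τ) + ν/2) * ((1/h^2) * Tu + (h^2/12 * Sv - h^2/144 * Tv))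
      = 0 := by
    rw [hSvuE] at hsum2
    linarith [hsum2]
  have hSvnn : 0 ≤ h^2/18 * Sv := mul_nonneg (by positivity) hSv0
  have hbr0 : 0 ≤ (1/h^2) * Tu + (h^2/12 * Sv - h^2/144 * Tv) := le_trans hSvnn hbr
  have hSuz : Su = 0 := by
    have h1 : 0 ≤ (μ/(2*τ) + ν/2) * ((1/h^2) * Tu + (h^2/12 * Sv - h^2/144 * Tv)) :=
      mul_nonneg (le_of_lt hc) hbr0
    have h2 : 1/(2*τ) * Su ≤ 0 := by linarith
    have h3 : Su = (2*τ) * (1/(2*τ) * Su) := by field_simp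
    have h4 : Su ≤ 0 := by
      rw [h3]; exact mul_nonpos_of_nonneg_of_nonpos (by positivity) h2
    linarith
  have hbrz : (1/h^2) * Tu + (h^2/12 * Sv - h^2/144 * Tv) = 0 := by
    have h2 : 0 < 1/(2*τ) := by positivity
    have : (μ/(2*τ) + ν/2) * ((1/h^2) * Tu + (h^2/12 * Sv - h^2/144 * Tv)) = 0 := by
      rw [hSuz] at hkey; linarith
    rcases mul_eq_zero.mp this with hcase | hcase
    · exact absurd hcase (ne_of_gt hc)
    · exact hcase
  have hSvz : Sv = 0 := by
    have h5 : h^2/18 * Sv ≤ 0 := by linarith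
    have h6 : h^2/18 * Sv = 0 := le_antisymm h5 hSvnn
    have h7 : (h^2/18 : ℝ) ≠ 0 := by positivity
    exact (mul_eq_zero.mp h6).resolve_left h7
  -- pointwise vanishing on the fundamental cell
  have hu0 : ∀ i ∈ Finset.Icc (1:ℤ) (M:ℤ), u i = 0 := by
    intro i hi
    have := (Finset.sum_eq_zero_iff_of_nonneg
      (fun j (_ : j ∈ Finset.Icc (1:ℤ) (M:ℤ)) => mul_self_nonneg (u j))).mp hSuz i hi
    exact mul_self_eq_zero.mp this
  have hv0 : ∀ i ∈ Finset.Icc (1:ℤ) (M:ℤ), v i = 0 := by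
    intro i hi
    have := (Finset.sum_eq_zero_iff_of_nonneg
      (fun j (_ : j ∈ Finset.Icc (1:ℤ) (M:ℤ)) => mul_self_nonneg (v j))).mp hSvz i hi
    exact mul_self_eq_zero.mp this
  intro i
  exact ⟨periodic_ext_zero hM u hu hu0 i, periodic_ext_zero hM v hv hv0 i⟩

end BBMB
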